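/- In the girth-4 setting: no vertex of T₀ is adjacent to any vertex of T₁. -/

import Mathlib

/-- The adjacency matrix of a simple graph over `ℝ` is Hermitian. -/
lemma adjMatrix_isHermitian {V : Type*} [Fintype V] (G : SimpleGraph V)
    [DecidableRel G.Adj] : ((G.adjMatrix ℝ)).IsHermitian := by
  rw [Matrix.IsHermitian, Matrix.conjTranspose_eq_transpose_of_trivial]
  exact G.isSymm_adjMatrix

/-- The number of eigenvalues (counted with multiplicity) of the real adjacency matrix of `G`
satisfying the predicate `p`. -/
noncomputable def eigCount {V : Type*} [Fintype V] [DecidableEq V]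
    (G : SimpleGraph V) (p : ℝ → Prop) : ℕ := by
  classical
  exact (Finset.univ.filter fun i =>
    p ((adjMatrix_isHermitian G).eigenvalues i)).card
/-- `HasMinor G H` : `H` is a minor of `G`, witnessed by a family of pairwise disjoint
nonempty branch sets, each inducing a connected subgraph of `G`, such that every edge of `H`
is realized by an edge of `G` between the corresponding branch sets. -/
def HasMinor {V : Type*} {W : Type*} (G : SimpleGraph V) (H : SimpleGraph W) : Prop :=
  ∃ B : W → Set V,
    (∀ w, (B w).Nonempty) ∧
    (Pairwise fun w₁ w₂ => Disjoint (B w₁) (B w₂)) ∧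
    (∀ w, (G.induce (B w)).Connected) ∧
    (∀ ⦃w₁ w₂⦄, H.Adj w₁ w₂ → ∃ a ∈ B w₁, ∃ b ∈ B w₂, G.Adj a b)

/-- `G` is planar in the sense of Wagner: it has neither `K₅` nor `K_{3,3}` as a minor. -/
def WagnerPlanar {V : Type*} (G : SimpleGraph V) : Prop :=
  ¬ HasMinor G (⊤ : SimpleGraph (Fin 5)) ∧
    ¬ HasMinor G (completeBipartiteGraph (Fin 3) (Fin 3))
/-- For a 4-cycle `x₀x₁x₂x₃x₀` in `G` and `S ⊆ Fin 4`, the set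
`T_S = {v ∉ {x₀,x₁,x₂,x₃} : N(v) ∩ {x₀,x₁,x₂,x₃} = {x i : i ∈ S}}`. -/
def TS {V : Type*} (G : SimpleGraph V) (x : Fin 4 → V) (S : Set (Fin 4)) : Set V :=
  {v | v ∉ Set.range x ∧ ∀ i, G.Adj v (x i) ↔ i ∈ S}

/-- The set `T_j` of vertices outside the 4-cycle having exactly `j` neighbors among
`{x₀,x₁,x₂,x₃}`. -/
def Tdeg {V : Type*} (G : SimpleGraph V) (x : Fin 4 → V) (j : ℕ) : Set V :=
  {v | v ∉ Set.range x ∧ {i : Fin 4 | G.Adj v (x i)}.ncard = j}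
open Matrix

section KeyLemmas
variable {n : Type*} [Fintype n] [DecidableEq n]
set_option linter.unusedSectionVars false

noncomputable def euclidE : (n → ℝ) ≃ EuclideanSpace ℝ n := (WithLp.equiv 2 (n → ℝ)).symm

lemma euclid_dot (x y : n → ℝ) : x ⬝ᵥ y = inner ℝ (euclidE x) (euclidE y) := by
  change _ = dotProduct y (star x); rw [star_trivial, dotProduct_comm]

lemma quad_eq (A : Matrix n n ℝ) (hA : A.IsHermitian) (z : n → ℝ) :
    (A *ᵥ z) ⬝ᵥ z = ∑ i, hA.eigenvalues i * (hA.eigenvectorBasis.repr (euclidE z) i)^2 ∧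
    z ⬝ᵥ z = ∑ i, (hA.eigenvectorBasis.repr (euclidE z) i)^2 := by
  classical
  set b := hA.eigenvectorBasis with hb
  have hbi : ∀ i, b i = euclidE (WithLp.equiv 2 (n → ℝ) (b i)) := by
    intro i; rw [euclidE]; simp
  have hrepr : ∀ w : n → ℝ, ∀ i, b.repr (euclidE w) i = (WithLp.equiv 2 (n → ℝ) (b i)) ⬝ᵥ w := by
    intro w i
    rw [b.repr_apply_apply, euclid_dot, ← hbi]
  have hAT : Aᵀ = A := by
    have := hA.eq; rwa [Matrix.conjTranspose_eq_transpose_of_trivial] at this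
  have hAz : ∀ i, b.repr (euclidE (A *ᵥ z)) i = hA.eigenvalues i * b.repr (euclidE z) i := by
    intro i
    have hmv : A *ᵥ (WithLp.equiv 2 (n → ℝ) (b i))
        = hA.eigenvalues i • (WithLp.equiv 2 (n → ℝ) (b i)) :=
      hA.mulVec_eigenvectorBasis i
    rw [hrepr, hrepr, Matrix.dotProduct_mulVec, ← Matrix.mulVec_transpose, hAT, hmv,
        smul_dotProduct, smul_eq_mul]
  have hinner : ∀ w w' : n → ℝ,
      w ⬝ᵥ w' = ∑ i, b.repr (euclidE w) i * b.repr (euclidE w') i := by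
    intro w w'
    have piInner : ∀ u v : EuclideanSpace ℝ n, (inner ℝ u v : ℝ) = ∑ i, u i * v i := by
      intro u v
      simp only [PiLp.inner_apply, RCLike.inner_apply, conj_trivial, mul_comm]
    rw [euclid_dot, ← b.repr.inner_map_map, piInner]
  constructor
  · rw [hinner (A *ᵥ z) z]
    refine Finset.sum_congr rfl fun i _ => ?_
    rw [hAz i]; ring
  · rw [hinner z z]
    refine Finset.sum_congr rfl fun i _ => ?_
    ring

lemma key_matrix (A : Matrix n n ℝ) (hA : A.IsHermitian)
    (hcard : ∀ i j, 1 < hA.eigenvalues i → 1 < hA.eigenvalues j → i = j)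
    (y₁ y₂ : n → ℝ) :
    ∃ a b : ℝ, ¬(a = 0 ∧ b = 0) ∧
      (A *ᵥ (fun p => a * y₁ p + b * y₂ p)) ⬝ᵥ (fun p => a * y₁ p + b * y₂ p)
        ≤ (fun p => a * y₁ p + b * y₂ p) ⬝ᵥ (fun p => a * y₁ p + b * y₂ p) := by
  classical
  set bb := hA.eigenvectorBasis with hbb
  have main : ∀ a b : ℝ,
      (∀ i, 1 < hA.eigenvalues i → bb.repr (euclidE (fun p => a * y₁ p + b * y₂ p)) i = 0) →
      (A *ᵥ (fun p => a * y₁ p + b * y₂ p)) ⬝ᵥ (fun p => a * y₁ p + b * y₂ p)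
        ≤ (fun p => a * y₁ p + b * y₂ p) ⬝ᵥ (fun p => a * y₁ p + b * y₂ p) := by
    intro a b h0
    obtain ⟨h1, h2⟩ := quad_eq A hA (fun p => a * y₁ p + b * y₂ p)
    rw [h1, h2]
    apply Finset.sum_le_sum
    intro i _
    by_cases hi : 1 < hA.eigenvalues i
    · rw [h0 i hi]; simp
    · push_neg at hi
      calc hA.eigenvalues i * (bb.repr (euclidE (fun p => a * y₁ p + b * y₂ p)) i) ^ 2
          ≤ 1 * (bb.repr (euclidE (fun p => a * y₁ p + b * y₂ p)) i) ^ 2 :=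
            mul_le_mul_of_nonneg_right hi (sq_nonneg _)
        _ = (bb.repr (euclidE (fun p => a * y₁ p + b * y₂ p)) i) ^ 2 := one_mul _
  have hlin : ∀ a b : ℝ, ∀ i, bb.repr (euclidE (fun p => a * y₁ p + b * y₂ p)) i
      = a * bb.repr (euclidE y₁) i + b * bb.repr (euclidE y₂) i := by
    intro a b i
    have hE : euclidE (fun p => a * y₁ p + b * y₂ p) = a • euclidE y₁ + b • euclidE y₂ := rfl
    rw [hE, map_add, _root_.map_smul, _root_.map_smul]
    simp [smul_eq_mul]
  by_cases hex : ∃ i, 1 < hA.eigenvalues i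
  · obtain ⟨i₀, hi₀⟩ := hex
    have huniq : ∀ i, 1 < hA.eigenvalues i → i = i₀ := fun i hi => hcard i i₀ hi hi₀
    by_cases hc : bb.repr (euclidE y₁) i₀ = 0 ∧ bb.repr (euclidE y₂) i₀ = 0
    · refine ⟨1, 0, by simp, main 1 0 fun i hi => ?_⟩
      rw [huniq i hi, hlin, hc.1, hc.2]; ring
    · refine ⟨bb.repr (euclidE y₂) i₀, -(bb.repr (euclidE y₁) i₀), fun h => hc ?_,
        main _ _ fun i hi => ?_⟩
      · exact ⟨by simpa using h.2, h.1⟩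
      · rw [huniq i hi, hlin]; ring
  · push_neg at hex
    exact ⟨1, 0, by simp, main 1 0 fun i hi => absurd hi (not_lt.mpr (hex i))⟩
end KeyLemmas

lemma conj_eq {V : Type*} [Fintype V] [DecidableEq V]
    (A : Matrix V V ℝ) (B : Matrix (Fin 6) (Fin 6) ℝ)
    (e : Fin 6 → V) (he : Function.Injective e)
    (hAB : ∀ i j, A (e i) (e j) = B i j)
    (w : V → ℝ) (ω : Fin 6 → ℝ) (hw : ∀ i, w (e i) = ω i)
    (hw0 : ∀ p, (∀ i, p ≠ e i) → w p = 0) :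
    (A *ᵥ w) ⬝ᵥ w = (B *ᵥ ω) ⬝ᵥ ω ∧ w ⬝ᵥ w = ω ⬝ᵥ ω := by
  classical
  have hsum : ∀ f : V → ℝ, (∀ p, (∀ i, p ≠ e i) → f p = 0) → ∑ p, f p = ∑ i, f (e i) := by
    intro f hf
    rw [show (Finset.univ : Finset V) = Finset.univ.image e ∪ (Finset.univ \ Finset.univ.image e) by
      rw [Finset.union_sdiff_of_subset (Finset.subset_univ _)]]
    rw [Finset.sum_union (Finset.disjoint_sdiff)]
    rw [Finset.sum_image (fun i _ j _ h => he h)]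
    have : ∑ p ∈ Finset.univ \ Finset.univ.image e, f p = 0 := by
      apply Finset.sum_eq_zero
      intro p hp
      rw [Finset.mem_sdiff, Finset.mem_image] at hp
      apply hf
      intro i hpe
      exact hp.2 ⟨i, Finset.mem_univ i, hpe.symm⟩
    rw [this, add_zero]
  constructor
  · have h1 : (A *ᵥ w) ⬝ᵥ w = ∑ i, (A *ᵥ w) (e i) * ω i := by
      rw [dotProduct, hsum _ (fun p hp => by rw [hw0 p hp, mul_zero])]
      exact Finset.sum_congr rfl fun i _ => by rw [hw]
    rw [h1, dotProduct]
    refine Finset.sum_congr rfl fun i _ => ?_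
    congr 1
    rw [Matrix.mulVec, dotProduct,
      hsum _ (fun p hp => by rw [hw0 p hp, mul_zero]), Matrix.mulVec, dotProduct]
    exact Finset.sum_congr rfl fun j _ => by rw [hAB, hw]
  · rw [dotProduct, hsum _ (fun p hp => by rw [hw0 p hp, mul_zero]), dotProduct]
    exact Finset.sum_congr rfl fun i _ => by rw [hw]

set_option maxHeartbeats 2000000 in
lemma main_aux {V : Type*} [Fintype V] [DecidableEq V] (G : SimpleGraph V)
    [inst : DecidableRel G.Adj]
    (hcard : ∀ i j, 1 < (adjMatrix_isHermitian G).eigenvalues i →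
      1 < (adjMatrix_isHermitian G).eigenvalues j → i = j)
    (v u x0 x1 x2 x3 : V)
    (hvu : G.Adj v u)
    (hux0 : G.Adj u x0) (h01 : G.Adj x0 x1) (h12 : G.Adj x1 x2) (h23 : G.Adj x2 x3)
    (h30 : G.Adj x3 x0)
    (hvx0 : ¬G.Adj v x0) (hvx1 : ¬G.Adj v x1) (hvx2 : ¬G.Adj v x2) (hvx3 : ¬G.Adj v x3)
    (hux1 : ¬G.Adj u x1) (hux2 : ¬G.Adj u x2) (hux3 : ¬G.Adj u x3)
    (h02 : ¬G.Adj x0 x2) (h13 : ¬G.Adj x1 x3)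
    (nvx0 : v ≠ x0) (nvx1 : v ≠ x1) (nvx2 : v ≠ x2) (nvx3 : v ≠ x3)
    (nux0 : u ≠ x0) (nux1 : u ≠ x1) (nux2 : u ≠ x2) (nux3 : u ≠ x3)
    (n01 : x0 ≠ x1) (n02 : x0 ≠ x2) (n03 : x0 ≠ x3) (n12 : x1 ≠ x2) (n13 : x1 ≠ x3)
    (n23 : x2 ≠ x3) : False := by
  have nvu : v ≠ u := hvu.ne
  have s_hvu : G.Adj u v := G.adj_symm hvu
  have s_hux0 : G.Adj x0 u := G.adj_symm hux0
  have s_h01 : G.Adj x1 x0 := G.adj_symm h01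
  have s_h12 : G.Adj x2 x1 := G.adj_symm h12
  have s_h23 : G.Adj x3 x2 := G.adj_symm h23
  have s_h30 : G.Adj x0 x3 := G.adj_symm h30
  have s_hvx0 : ¬G.Adj x0 v := fun h => hvx0 (G.adj_symm h)
  have s_hvx1 : ¬G.Adj x1 v := fun h => hvx1 (G.adj_symm h)
  have s_hvx2 : ¬G.Adj x2 v := fun h => hvx2 (G.adj_symm h)
  have s_hvx3 : ¬G.Adj x3 v := fun h => hvx3 (G.adj_symm h)
  have s_hux1 : ¬G.Adj x1 u := fun h => hux1 (G.adj_symm h)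
  have s_hux2 : ¬G.Adj x2 u := fun h => hux2 (G.adj_symm h)
  have s_hux3 : ¬G.Adj x3 u := fun h => hux3 (G.adj_symm h)
  have s_h02 : ¬G.Adj x2 x0 := fun h => h02 (G.adj_symm h)
  have s_h13 : ¬G.Adj x3 x1 := fun h => h13 (G.adj_symm h)
  set y₁ : V → ℝ := fun p => if p = v then 1 else if p = u then 3 else if p = x0 then 6
    else if p = x1 then 4 else if p = x2 then 4 else if p = x3 then 4 else 0 with hy₁
  set y₂ : V → ℝ := fun p => if p = v then 6 else if p = u then 6 else if p = x0 then 1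
    else if p = x1 then -2 else if p = x2 then -4 else if p = x3 then -2 else 0 with hy₂
  obtain ⟨a, b, hab, hle⟩ := key_matrix (G.adjMatrix ℝ) (adjMatrix_isHermitian G) hcard y₁ y₂
  set e : Fin 6 → V := ![v, u, x0, x1, x2, x3] with he'
  set g : V → Fin 6 := fun p => if p = v then 0 else if p = u then 1 else if p = x0 then 2
    else if p = x1 then 3 else if p = x2 then 4 else 5 with hg
  have hgv : g v = 0 := by simp [hg]
  have hgu : g u = 1 := by simp [hg, nvu.symm]
  have hgx0 : g x0 = 2 := by simp [hg, nvx0.symm, nux0.symm]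
  have hgx1 : g x1 = 3 := by simp [hg, nvx1.symm, nux1.symm, n01.symm]
  have hgx2 : g x2 = 4 := by simp [hg, nvx2.symm, nux2.symm, n02.symm, n12.symm]
  have hgx3 : g x3 = 5 := by simp [hg, nvx3.symm, nux3.symm, n03.symm, n13.symm, n23.symm]
  have he : Function.Injective e := by
    have hge : ∀ i, g (e i) = i := by
      intro i
      fin_cases i <;> [exact hgv; exact hgu; exact hgx0; exact hgx1; exact hgx2; exact hgx3]
    exact Function.LeftInverse.injective hge
  set B : Matrix (Fin 6) (Fin 6) ℝ :=
    !![0,1,0,0,0,0; 1,0,1,0,0,0; 0,1,0,1,0,1; 0,0,1,0,1,0; 0,0,0,1,0,1; 0,0,1,0,1,0] with hB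
  have hAB : ∀ i j, (G.adjMatrix ℝ) (e i) (e j) = B i j := by
    intro i j
    fin_cases i <;> fin_cases j <;>
      [
        exact (show (G.adjMatrix ℝ) v v = 0 by simp [SimpleGraph.adjMatrix_apply]);
        exact (show (G.adjMatrix ℝ) v u = 1 by simp [SimpleGraph.adjMatrix_apply, hvu]);
        exact (show (G.adjMatrix ℝ) v x0 = 0 by simp [SimpleGraph.adjMatrix_apply, hvx0]);
        exact (show (G.adjMatrix ℝ) v x1 = 0 by simp [SimpleGraph.adjMatrix_apply, hvx1]);
        exact (show (G.adjMatrix ℝ) v x2 = 0 by simp [SimpleGraph.adjMatrix_apply, hvx2]);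
        exact (show (G.adjMatrix ℝ) v x3 = 0 by simp [SimpleGraph.adjMatrix_apply, hvx3]);
        exact (show (G.adjMatrix ℝ) u v = 1 by simp [SimpleGraph.adjMatrix_apply, s_hvu]);
        exact (show (G.adjMatrix ℝ) u u = 0 by simp [SimpleGraph.adjMatrix_apply]);
        exact (show (G.adjMatrix ℝ) u x0 = 1 by simp [SimpleGraph.adjMatrix_apply, hux0]);
        exact (show (G.adjMatrix ℝ) u x1 = 0 by simp [SimpleGraph.adjMatrix_apply, hux1]);
        exact (show (G.adjMatrix ℝ) u x2 = 0 by simp [SimpleGraph.adjMatrix_apply, hux2]);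
        exact (show (G.adjMatrix ℝ) u x3 = 0 by simp [SimpleGraph.adjMatrix_apply, hux3]);
        exact (show (G.adjMatrix ℝ) x0 v = 0 by simp [SimpleGraph.adjMatrix_apply, s_hvx0]);
        exact (show (G.adjMatrix ℝ) x0 u = 1 by simp [SimpleGraph.adjMatrix_apply, s_hux0]);
        exact (show (G.adjMatrix ℝ) x0 x0 = 0 by simp [SimpleGraph.adjMatrix_apply]);
        exact (show (G.adjMatrix ℝ) x0 x1 = 1 by simp [SimpleGraph.adjMatrix_apply, h01]);
        exact (show (G.adjMatrix ℝ) x0 x2 = 0 by simp [SimpleGraph.adjMatrix_apply, h02]);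
        exact (show (G.adjMatrix ℝ) x0 x3 = 1 by simp [SimpleGraph.adjMatrix_apply, s_h30]);
        exact (show (G.adjMatrix ℝ) x1 v = 0 by simp [SimpleGraph.adjMatrix_apply, s_hvx1]);
        exact (show (G.adjMatrix ℝ) x1 u = 0 by simp [SimpleGraph.adjMatrix_apply, s_hux1]);
        exact (show (G.adjMatrix ℝ) x1 x0 = 1 by simp [SimpleGraph.adjMatrix_apply, s_h01]);
        exact (show (G.adjMatrix ℝ) x1 x1 = 0 by simp [SimpleGraph.adjMatrix_apply]);
        exact (show (G.adjMatrix ℝ) x1 x2 = 1 by simp [SimpleGraph.adjMatrix_apply, h12]);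
        exact (show (G.adjMatrix ℝ) x1 x3 = 0 by simp [SimpleGraph.adjMatrix_apply, h13]);
        exact (show (G.adjMatrix ℝ) x2 v = 0 by simp [SimpleGraph.adjMatrix_apply, s_hvx2]);
        exact (show (G.adjMatrix ℝ) x2 u = 0 by simp [SimpleGraph.adjMatrix_apply, s_hux2]);
        exact (show (G.adjMatrix ℝ) x2 x0 = 0 by simp [SimpleGraph.adjMatrix_apply, s_h02]);
        exact (show (G.adjMatrix ℝ) x2 x1 = 1 by simp [SimpleGraph.adjMatrix_apply, s_h12]);
        exact (show (G.adjMatrix ℝ) x2 x2 = 0 by simp [SimpleGraph.adjMatrix_apply]);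
        exact (show (G.adjMatrix ℝ) x2 x3 = 1 by simp [SimpleGraph.adjMatrix_apply, h23]);
        exact (show (G.adjMatrix ℝ) x3 v = 0 by simp [SimpleGraph.adjMatrix_apply, s_hvx3]);
        exact (show (G.adjMatrix ℝ) x3 u = 0 by simp [SimpleGraph.adjMatrix_apply, s_hux3]);
        exact (show (G.adjMatrix ℝ) x3 x0 = 1 by simp [SimpleGraph.adjMatrix_apply, h30]);
        exact (show (G.adjMatrix ℝ) x3 x1 = 0 by simp [SimpleGraph.adjMatrix_apply, s_h13]);
        exact (show (G.adjMatrix ℝ) x3 x2 = 1 by simp [SimpleGraph.adjMatrix_apply, s_h23]);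
        exact (show (G.adjMatrix ℝ) x3 x3 = 0 by simp [SimpleGraph.adjMatrix_apply])
      ]
  set w : V → ℝ := fun p => a * y₁ p + b * y₂ p with hw'
  set ω : Fin 6 → ℝ := fun i => a * (![1,3,6,4,4,4] : Fin 6 → ℝ) i + b * (![6,6,1,-2,-4,-2] : Fin 6 → ℝ) i with hω'
  have hwvv : w v = a * (1 : ℝ) + b * (6 : ℝ) := by simp [hw', hy₁, hy₂]; try ring
  have hwvu : w u = a * (3 : ℝ) + b * (6 : ℝ) := by simp [hw', hy₁, hy₂, nvu.symm]; try ring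
  have hwvx0 : w x0 = a * (6 : ℝ) + b * (1 : ℝ) := by simp [hw', hy₁, hy₂, nvx0.symm, nux0.symm]; try ring
  have hwvx1 : w x1 = a * (4 : ℝ) + b * (-2 : ℝ) := by simp [hw', hy₁, hy₂, nvx1.symm, nux1.symm, n01.symm]; try ring
  have hwvx2 : w x2 = a * (4 : ℝ) + b * (-4 : ℝ) := by simp [hw', hy₁, hy₂, nvx2.symm, nux2.symm, n02.symm, n12.symm]; try ring
  have hwvx3 : w x3 = a * (4 : ℝ) + b * (-2 : ℝ) := by simp [hw', hy₁, hy₂, nvx3.symm, nux3.symm, n03.symm, n13.symm, n23.symm]; try ring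
  have hw : ∀ i, w (e i) = ω i := by
    intro i
    fin_cases i <;> [exact hwvv; exact hwvu; exact hwvx0; exact hwvx1; exact hwvx2; exact hwvx3]
  have hw0 : ∀ p, (∀ i, p ≠ e i) → w p = 0 := by
    intro p hp
    have h0 : p ≠ v := hp 0
    have h1 : p ≠ u := hp 1
    have h2 : p ≠ x0 := hp 2
    have h3 : p ≠ x1 := hp 3
    have h4 : p ≠ x2 := hp 4
    have h5 : p ≠ x3 := hp 5
    simp [hw', hy₁, hy₂, h0, h1, h2, h3, h4, h5]
  obtain ⟨hQ, hN⟩ := conj_eq (G.adjMatrix ℝ) B e he hAB w ω hw hw0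
  rw [hQ, hN] at hle
  have hω0 : ω 0 = a * (1 : ℝ) + b * (6 : ℝ) := rfl
  have hω1 : ω 1 = a * (3 : ℝ) + b * (6 : ℝ) := rfl
  have hω2 : ω 2 = a * (6 : ℝ) + b * (1 : ℝ) := rfl
  have hω3 : ω 3 = a * (4 : ℝ) + b * (-2 : ℝ) := rfl
  have hω4 : ω 4 = a * (4 : ℝ) + b * (-4 : ℝ) := rfl
  have hω5 : ω 5 = a * (4 : ℝ) + b * (-2 : ℝ) := rfl
  have hB00 : B 0 0 = (0 : ℝ) := rfl
  have hB01 : B 0 1 = (1 : ℝ) := rfl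
  have hB02 : B 0 2 = (0 : ℝ) := rfl
  have hB03 : B 0 3 = (0 : ℝ) := rfl
  have hB04 : B 0 4 = (0 : ℝ) := rfl
  have hB05 : B 0 5 = (0 : ℝ) := rfl
  have hB10 : B 1 0 = (1 : ℝ) := rfl
  have hB11 : B 1 1 = (0 : ℝ) := rfl
  have hB12 : B 1 2 = (1 : ℝ) := rfl
  have hB13 : B 1 3 = (0 : ℝ) := rfl
  have hB14 : B 1 4 = (0 : ℝ) := rfl
  have hB15 : B 1 5 = (0 : ℝ) := rfl
  have hB20 : B 2 0 = (0 : ℝ) := rfl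
  have hB21 : B 2 1 = (1 : ℝ) := rfl
  have hB22 : B 2 2 = (0 : ℝ) := rfl
  have hB23 : B 2 3 = (1 : ℝ) := rfl
  have hB24 : B 2 4 = (0 : ℝ) := rfl
  have hB25 : B 2 5 = (1 : ℝ) := rfl
  have hB30 : B 3 0 = (0 : ℝ) := rfl
  have hB31 : B 3 1 = (0 : ℝ) := rfl
  have hB32 : B 3 2 = (1 : ℝ) := rfl
  have hB33 : B 3 3 = (0 : ℝ) := rfl
  have hB34 : B 3 4 = (1 : ℝ) := rfl
  have hB35 : B 3 5 = (0 : ℝ) := rfl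
  have hB40 : B 4 0 = (0 : ℝ) := rfl
  have hB41 : B 4 1 = (0 : ℝ) := rfl
  have hB42 : B 4 2 = (0 : ℝ) := rfl
  have hB43 : B 4 3 = (1 : ℝ) := rfl
  have hB44 : B 4 4 = (0 : ℝ) := rfl
  have hB45 : B 4 5 = (1 : ℝ) := rfl
  have hB50 : B 5 0 = (0 : ℝ) := rfl
  have hB51 : B 5 1 = (0 : ℝ) := rfl
  have hB52 : B 5 2 = (1 : ℝ) := rfl
  have hB53 : B 5 3 = (0 : ℝ) := rfl
  have hB54 : B 5 4 = (1 : ℝ) := rfl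
  have hB55 : B 5 5 = (0 : ℝ) := rfl
  have hval : (B *ᵥ ω) ⬝ᵥ ω - ω ⬝ᵥ ω = 108 * a^2 + 2 * a * b + 11 * b^2 := by
    simp only [Matrix.mulVec, dotProduct, Fin.sum_univ_six,
      hB00, hB01, hB02, hB03, hB04, hB05, hB10, hB11, hB12, hB13, hB14, hB15, hB20, hB21, hB22, hB23, hB24, hB25, hB30, hB31, hB32, hB33, hB34, hB35, hB40, hB41, hB42, hB43, hB44, hB45, hB50, hB51, hB52, hB53, hB54, hB55,
      hω0, hω1, hω2, hω3, hω4, hω5]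
    ring
  have hpos : 0 < 108 * a^2 + 2 * a * b + 11 * b^2 := by
    have hsplit : 108 * a^2 + 2 * a * b + 11 * b^2 = (a + b)^2 + 107 * a^2 + 10 * b^2 := by
      ring
    rw [hsplit]
    rcases not_and_or.mp hab with ha | hb
    · positivity
    · positivity
  have hd : 108 * a^2 + 2 * a * b + 11 * b^2 ≤ 0 := by
    rw [← hval]
    exact sub_nonpos.mpr hle
  exact hpos.not_ge hd

/-- in the girth-4 setting, no vertex of `T₀` is adjacent to any vertex of
`T₁`. -/
theorem girth_four_no_T0_T1_edge {V : Type*} [Fintype V] [DecidableEq V] (G : SimpleGraph V)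
    (hconn : G.Connected) (htf : G.CliqueFree 3)
    (hl : eigCount G (fun t => 1 < t) ≤ 1) (hplanar : WagnerPlanar G)
    (hgirth : G.egirth = 4) (x : Fin 4 → V) (hinj : Function.Injective x)
    (hcyc : ∀ i, G.Adj (x i) (x (i + 1))) :
    ∀ v ∈ Tdeg G x 0, ∀ u ∈ Tdeg G x 1, ¬ G.Adj v u := by

  intro v hv u hu hadj
  obtain ⟨hvr, hv0⟩ := hv
  obtain ⟨hur, hu1⟩ := hu
  have hvempty : {i : Fin 4 | G.Adj v (x i)} = ∅ :=
    (Set.ncard_eq_zero (Set.toFinite _)).mp hv0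
  have hvadj : ∀ i, ¬ G.Adj v (x i) := by
    intro i hi
    have : i ∈ ({i : Fin 4 | G.Adj v (x i)}) := hi
    rw [hvempty] at this
    exact this
  obtain ⟨k, hk⟩ := Set.ncard_eq_one.mp hu1
  have huk : G.Adj u (x k) := by
    have : k ∈ {i : Fin 4 | G.Adj u (x i)} := by rw [hk]; exact rfl
    exact this
  have hknej : ∀ d : Fin 4, d ≠ 0 → ¬ G.Adj u (x (k + d)) := by
    intro d hd hA
    apply hd
    have hm : (k + d) ∈ ({k} : Set (Fin 4)) := by rw [← hk]; exact hA
    have hkd := Set.mem_singleton_iff.mp hm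
    exact add_left_cancel (show k + d = k + 0 by rwa [add_zero])
  have htri : ∀ a b c : V, G.Adj a b → G.Adj b c → G.Adj a c → False := by
    intro a b c hab hbc hac
    exact htf {a, b, c} (SimpleGraph.is3Clique_triple_iff.mpr ⟨hab, hac, hbc⟩)
  have h01 : G.Adj (x k) (x (k + 1)) := hcyc k
  have h12 : G.Adj (x (k + 1)) (x (k + 2)) := by
    have := hcyc (k + 1); rwa [show k + 1 + 1 = k + 2 by rw [add_assoc, show (1 : Fin 4) + 1 = 2 from rfl]] at this
  have h23 : G.Adj (x (k + 2)) (x (k + 3)) := by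
    have := hcyc (k + 2); rwa [show k + 2 + 1 = k + 3 by rw [add_assoc, show (2 : Fin 4) + 1 = 3 from rfl]] at this
  have h30 : G.Adj (x (k + 3)) (x k) := by
    have := hcyc (k + 3)
    rwa [show k + 3 + 1 = k by rw [add_assoc, show (3 : Fin 4) + 1 = 0 from rfl, add_zero]] at this
  have h02 : ¬ G.Adj (x k) (x (k + 2)) := fun h => htri _ _ _ h01 h12 h
  have h13 : ¬ G.Adj (x (k + 1)) (x (k + 3)) := fun h => htri _ _ _ h12 h23 h
  have hfin : ∀ d e : Fin 4, x (k + d) = x (k + e) → d = e := fun d e h =>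
    add_left_cancel (hinj h)
  unfold eigCount at hl
  rw [Finset.card_le_one] at hl
  simp only [Finset.mem_filter, Finset.mem_univ, true_and] at hl
  exact main_aux G (inst := fun a b => Classical.propDecidable _)
    (fun i j hi hj => hl i hi j hj) v u (x k) (x (k + 1)) (x (k + 2)) (x (k + 3))
    hadj huk h01 h12 h23 h30
    (hvadj k) (hvadj (k + 1)) (hvadj (k + 2)) (hvadj (k + 3))
    (hknej 1 (by decide)) (hknej 2 (by decide)) (hknej 3 (by decide))
    h02 h13
    (fun h => hvr ⟨k, h.symm⟩) (fun h => hvr ⟨k + 1, h.symm⟩)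
    (fun h => hvr ⟨k + 2, h.symm⟩) (fun h => hvr ⟨k + 3, h.symm⟩)
    (fun h => hur ⟨k, h.symm⟩) (fun h => hur ⟨k + 1, h.symm⟩)
    (fun h => hur ⟨k + 2, h.symm⟩) (fun h => hur ⟨k + 3, h.symm⟩)
    (fun h => absurd (hfin 0 1 (by rwa [add_zero])) (by decide))
    (fun h => absurd (hfin 0 2 (by rwa [add_zero])) (by decide))
    (fun h => absurd (hfin 0 3 (by rwa [add_zero])) (by decide))
    (fun h => absurd (hfin 1 2 h) (by decide))
    (fun h => absurd (hfin 1 3 h) (by decide))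
    (fun h => absurd (hfin 2 3 h) (by decide))
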